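/- (Gale, 1968) For any matroid M on a finite ground set E with an injective weight function w : E → ℝ, the independent set produced by the greedy algorithm (repeatedly adding the highest-weight element that keeps the set independent) Gale dominates every independent set of M, where Gale dominance is with respect to w. -/

import Mathlib

attribute [local instance] Classical.propDecidable

noncomputable section

/-- A matroid on a finite ground type, given by its family of independent finsets. -/
structure FinsetMatroid (E : Type*) where
  Indep : Finset E → Prop
  indep_empty : Indep ∅
  indep_subset : ∀ ⦃F G : Finset E⦄, Indep F → G ⊆ F → Indep G
  indep_exchange : ∀ ⦃F G : Finset E⦄, Indep F → Indep G → G.card < F.card →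
    ∃ x ∈ F \ G, Indep (insert x G)

variable {E : Type*} [DecidableEq E]

/-- `l` records a run of the greedy algorithm for matroid `M` under weights `w`:
at each step the added element preserves independence and has maximal weight among
all elements doing so, and at the end no further element can be added. -/
def IsGreedyRun (M : FinsetMatroid E) (w : E → ℝ) (l : List E) : Prop :=
  (∀ (k : ℕ) (hk : k < l.length),
      l.get ⟨k, hk⟩ ∉ (l.take k).toFinset ∧
      M.Indep (insert (l.get ⟨k, hk⟩) (l.take k).toFinset) ∧
      ∀ x : E, x ∉ (l.take k).toFinset → M.Indep (insert x (l.take k).toFinset) →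
        w x ≤ w (l.get ⟨k, hk⟩)) ∧
  ∀ x : E, x ∉ l.toFinset → ¬ M.Indep (insert x l.toFinset)

/-- The `ℓ`-th highest weight (0-indexed) among members of `S`, defaulting to `0`. -/
def nthScore (w : E → ℝ) (S : Finset E) (ℓ : ℕ) : ℝ :=
  (((S.image w).sort (· ≤ ·)).reverse).getD ℓ 0

/-- `I` Gale dominates `J` with respect to the weights `w`. -/
def GaleDom (w : E → ℝ) (I J : Finset E) : Prop :=
  J.card ≤ I.card ∧ ∀ ℓ < J.card, nthScore w J ℓ ≤ nthScore w I ℓ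

lemma FinsetMatroid.exchange' {E : Type*} [deq : DecidableEq E] (M : FinsetMatroid E)
    {F G : Finset E} (hF : M.Indep F) (hG : M.Indep G) (h : G.card < F.card) :
    ∃ x, x ∈ F ∧ x ∉ G ∧ M.Indep (insert x G) := by
  obtain ⟨x, hx, hxi⟩ := M.indep_exchange hF hG h
  have e : (fun a b => Classical.propDecidable (a = b) : DecidableEq E) = deq := by
    funext a b
    exact Subsingleton.elim _ _
  rw [e] at hx hxi
  rw [Finset.mem_sdiff] at hx
  exact ⟨x, hx.1, hx.2, hxi⟩

section Helpers

variable {M : FinsetMatroid E} {w : E → ℝ} {l : List E}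

lemma take_toFinset_subset (l : List E) {k m : ℕ} (h : k ≤ m) :
    (l.take k).toFinset ⊆ (l.take m).toFinset := by
  intro x hx
  rw [List.mem_toFinset] at hx ⊢
  have : l.take k = (l.take m).take k := by
    rw [List.take_take, min_eq_left h]
  rw [this] at hx
  exact List.take_subset _ _ hx

lemma get_mem_take_toFinset {k m : ℕ} (hk : k < l.length) (hkm : k < m) :
    l.get ⟨k, hk⟩ ∈ (l.take m).toFinset := by
  rw [List.mem_toFinset]
  have hlen : k < (l.take m).length := by
    rw [List.length_take]; omega
  have : (l.take m)[k] = l[k] := List.getElem_take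
  rw [show l.get ⟨k, hk⟩ = l[k] from rfl, ← this]
  exact List.getElem_mem hlen

lemma greedy_nodup (hl : IsGreedyRun M w l) : l.Nodup := by
  rw [List.nodup_iff_injective_get]
  rintro ⟨i, hi⟩ ⟨j, hj⟩ hij
  rcases lt_trichotomy i j with h | h | h
  · have hmem := get_mem_take_toFinset hi h
    rw [hij] at hmem
    exact absurd hmem ((hl.1 j hj).1)
  · exact Fin.ext h
  · have hmem := get_mem_take_toFinset hj h
    rw [← hij] at hmem
    exact absurd hmem ((hl.1 i hi).1)

lemma greedy_weight_le (hl : IsGreedyRun M w l) {k m : ℕ} (hm : m < l.length) (hkm : k ≤ m) :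
    w (l.get ⟨m, hm⟩) ≤ w (l.get ⟨k, lt_of_le_of_lt hkm hm⟩) := by
  rcases eq_or_lt_of_le hkm with rfl | hkm'
  · exact le_refl _
  have hk : k < l.length := lt_of_le_of_lt hkm hm
  apply (hl.1 k hk).2.2
  · -- l.get m ∉ (l.take k).toFinset
    intro hmem
    rw [List.mem_toFinset] at hmem
    obtain ⟨i, hi, hig⟩ := List.getElem_of_mem hmem
    rw [List.length_take] at hi
    have hi' : i < l.length := lt_of_lt_of_le (lt_of_lt_of_le hi (min_le_right _ _)) le_rfl
    rw [List.getElem_take] at hig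
    have hinj := greedy_nodup hl
    rw [List.nodup_iff_injective_get] at hinj
    have : (⟨i, hi'⟩ : Fin l.length) = ⟨m, hm⟩ := hinj hig
    have : i = m := congrArg Fin.val this
    omega
  · -- independence
    exact M.indep_subset (hl.1 m hm).2.1
      (Finset.insert_subset_insert _ (take_toFinset_subset l (le_of_lt hkm')))

lemma indep_take (hl : IsGreedyRun M w l) : ∀ k, M.Indep ((l.take k).toFinset) := by
  intro k
  induction k with
  | zero => simpa using M.indep_empty
  | succ k ih =>
    by_cases hk : k < l.length
    · have hstep := (hl.1 k hk).2.1
      have : (l.take (k + 1)).toFinset = insert (l.get ⟨k, hk⟩) (l.take k).toFinset := by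
        ext x
        simp only [List.take_succ, List.getElem?_eq_getElem hk, Option.toList_some,
          List.toFinset_append, List.mem_toFinset, Finset.mem_union, Finset.mem_insert,
          List.toFinset_cons, List.toFinset_nil, insert_empty_eq, Finset.mem_singleton]
        tauto
      rw [this]
      exact hstep
    · rw [List.take_of_length_le (by omega)]
      rw [List.take_of_length_le (by omega)] at ih
      exact ih

lemma indep_greedy (hl : IsGreedyRun M w l) : M.Indep l.toFinset := by
  have := indep_take hl l.length
  rwa [List.take_length] at this

/-- The sorted-descending weight list of the greedy set is just `l.map w`. -/
lemma greedy_sort_eq (hw : Function.Injective w) (hl : IsGreedyRun M w l) :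
    ((l.toFinset.image w).sort (· ≤ ·)).reverse = l.map w := by
  have hnd : l.Nodup := greedy_nodup hl
  have hperm : ((l.toFinset.image w).sort (· ≤ ·)).Perm (l.map w) := by
    rw [← Multiset.coe_eq_coe, Finset.sort_eq]
    have h1 : l.toFinset.val = (l : Multiset E) := by
      show ((l : Multiset E)).dedup = (l : Multiset E)
      exact Multiset.dedup_eq_self.mpr (Multiset.coe_nodup.mpr hnd)
    rw [Finset.image_val, h1]
    have h2 : Multiset.map w (l : Multiset E) = ((l.map w : List ℝ) : Multiset ℝ) := by
      simp
    rw [h2, Multiset.dedup_eq_self.mpr (Multiset.coe_nodup.mpr (List.Nodup.map hw hnd))]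
  have hperm' : ((l.toFinset.image w).sort (· ≤ ·)).Perm (l.map w).reverse :=
    hperm.trans (List.reverse_perm _).symm
  have hsorted : List.Pairwise (· ≤ ·) (l.map w).reverse := by
    rw [List.pairwise_reverse, List.pairwise_iff_get]
    intro i j hij
    have hi : (i : ℕ) < l.length := by simpa using i.isLt
    have hj : (j : ℕ) < l.length := by simpa using j.isLt
    have := greedy_weight_le hl hj (le_of_lt hij)
    simpa [List.getElem_map] using this
  have := List.Perm.eq_of_pairwise' (Finset.pairwise_sort _ _) hsorted hperm'
  rw [this, List.reverse_reverse]

lemma greedy_nthScore (hw : Function.Injective w) (hl : IsGreedyRun M w l)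
    {k : ℕ} (hk : k < l.length) :
    nthScore w l.toFinset k = w (l.get ⟨k, hk⟩) := by
  rw [nthScore, greedy_sort_eq hw hl, List.getD_eq_getElem _ _ (by simpa using hk),
    List.getElem_map]
  rfl

/-- There is a large independent subset of `J` all of whose weights reach `nthScore w J ℓ`. -/
lemma exists_high_subset (hw : Function.Injective w) (J : Finset E) {ℓ : ℕ}
    (hℓ : ℓ < J.card) :
    ∃ J' : Finset E, J' ⊆ J ∧ ℓ < J'.card ∧ ∀ x ∈ J', nthScore w J ℓ ≤ w x := by
  classical
  set s : List ℝ := ((J.image w).sort (· ≤ ·)).reverse with hs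
  have hlen : s.length = J.card := by
    simp [hs, Finset.length_sort, Finset.card_image_of_injective _ hw]
  have hℓs : ℓ < s.length := by omega
  set t : ℝ := nthScore w J ℓ with ht
  have htget : t = s[ℓ] := by
    rw [ht, nthScore, ← hs, List.getD_eq_getElem _ _ hℓs]
  refine ⟨J.filter (fun x => t ≤ w x), Finset.filter_subset _ _, ?_, ?_⟩
  · -- card
    have hnd : s.Nodup := by rw [hs, List.nodup_reverse]; exact Finset.sort_nodup _ _
    have hcard : (J.filter (fun x => t ≤ w x)).card
        = ((J.image w).filter (fun a => t ≤ a)).card := by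
      rw [Finset.filter_image, Finset.card_image_of_injective _ hw]
    have hsub : (s.take (ℓ + 1)).toFinset ⊆ (J.image w).filter (fun a => t ≤ a) := by
      intro a ha
      rw [List.mem_toFinset] at ha
      obtain ⟨i, hi, hia⟩ := List.getElem_of_mem ha
      rw [List.length_take] at hi
      have hi' : i < s.length := by omega
      rw [List.getElem_take] at hia
      rw [Finset.mem_filter]
      constructor
      · have : a ∈ s := hia ▸ List.getElem_mem hi'
        rw [hs, List.mem_reverse, Finset.mem_sort] at this
        exact this
      · -- t = s[ℓ] ≤ s[i] since i ≤ ℓ and s sorted descending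
        rcases eq_or_lt_of_le (show i ≤ ℓ by omega) with rfl | hil
        · rw [htget, hia]
        · have hdesc : List.Pairwise (fun a b : ℝ => b ≤ a) s := by
            rw [hs, List.pairwise_reverse]
            exact (Finset.pairwise_sort _ _)
          rw [List.pairwise_iff_get] at hdesc
          rw [htget, ← hia]
          exact hdesc ⟨i, hi'⟩ ⟨ℓ, hℓs⟩ hil
    have hnd' : (s.take (ℓ + 1)).Nodup := hnd.sublist (List.take_sublist _ _)
    have hc1 : (s.take (ℓ + 1)).toFinset.card = ℓ + 1 := by
      rw [List.toFinset_card_of_nodup hnd', List.length_take]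
      omega
    have := Finset.card_le_card hsub
    omega
  · intro x hx
    exact (Finset.mem_filter.mp hx).2

end Helpers

/-- Gale 1968: the greedy independent set Gale dominates every independent set. -/
theorem greedy_galeDom (M : FinsetMatroid E) (w : E → ℝ) (hw : Function.Injective w)
    (l : List E) (hl : IsGreedyRun M w l) (J : Finset E) (hJ : M.Indep J) :
    GaleDom w l.toFinset J := by
  have hnd := greedy_nodup hl
  have hcardl : l.toFinset.card = l.length := List.toFinset_card_of_nodup hnd
  have hIndepL := indep_greedy hl
  constructor
  · by_contra h
    push_neg at h
    obtain ⟨x, hx1, hx2, hxi⟩ := M.exchange' hJ hIndepL (by omega)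
    exact hl.2 x hx2 hxi
  · intro ℓ hℓ
    obtain ⟨J', hJ'sub, hJ'card, hJ'w⟩ := exists_high_subset hw J hℓ
    have hJ' : M.Indep J' := M.indep_subset hJ hJ'sub
    have hℓn : ℓ < l.length := by
      by_contra hn
      push_neg at hn
      obtain ⟨x, hx1, hx2, hxi⟩ := M.exchange' hJ' hIndepL (by omega)
      exact hl.2 x hx2 hxi
    have htake : ((l.take ℓ).toFinset).card = ℓ := by
      rw [List.toFinset_card_of_nodup (hnd.sublist (List.take_sublist _ _)), List.length_take]
      omega
    obtain ⟨x, hx1, hx2, hxi⟩ := M.exchange' hJ' (indep_take hl ℓ) (by omega)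
    have hle := (hl.1 ℓ hℓn).2.2 x hx2 hxi
    rw [greedy_nthScore hw hl hℓn]
    exact le_trans (hJ'w x hx1) hle
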